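/- Let ξ, ζ ∈ ℂ with |ζ| < 1. If ξ ≠ 0 and |arg ξ| ≤ π/2, then 1 + ξ + ζ ≠ 0 and |arg(1 + ξ + ζ)| ≤ |arg ξ| + |ζ|/(1 − |ζ|). If ξ = 0, then 1 + ζ ≠ 0 and |arg(1 + ζ)| ≤ |ζ|/(1 − |ζ|). -/

import Mathlib

open Complex Real

lemma abs_arctan_le_abs' (x : ℝ) : |Real.arctan x| ≤ |x| := by
  have key : ∀ y : ℝ, 0 ≤ y → Real.arctan y ≤ y := by
    intro y hy
    rcases eq_or_lt_of_le hy with h | h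
    · simp [← h]
    · have h1 : 0 < Real.arctan y := by
        have := Real.arctan_strictMono h
        simpa using this
      have h2 : Real.arctan y < π / 2 := Real.arctan_lt_pi_div_two y
      have h3 := Real.lt_tan h1 h2
      rw [Real.tan_arctan] at h3
      exact h3.le
  have hnn : ∀ y : ℝ, 0 ≤ y → 0 ≤ Real.arctan y := by
    intro y hy
    have := Real.arctan_strictMono.monotone hy
    simpa using this
  rcases le_total 0 x with hx | hx
  · rw [_root_.abs_of_nonneg hx, _root_.abs_of_nonneg (hnn x hx)]
    exact key x hx
  · rw [_root_.abs_of_nonpos hx, _root_.abs_of_nonpos (by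
      have := hnn (-x) (by linarith)
      rw [Real.arctan_neg] at this
      linarith)]
    have := key (-x) (by linarith)
    rw [Real.arctan_neg] at this
    linarith

lemma arg_eq_arctan_of_re_pos {z : ℂ} (hz : 0 < z.re) :
    z.arg = Real.arctan (z.im / z.re) := by
  have h1 : |z.arg| < π / 2 := Complex.abs_arg_lt_pi_div_two_iff.mpr (Or.inl hz)
  rw [abs_lt] at h1
  rw [← Complex.tan_arg, Real.arctan_tan h1.1 h1.2]

lemma arg_one_add_le {z : ℂ} (hz : ‖z‖ < 1) :
    |(1 + z).arg| ≤ ‖z‖ / (1 - ‖z‖) := by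
  have hre : 0 < (1 + z).re := by
    have := neg_le_of_abs_le (Complex.abs_re_le_norm z)
    simp only [Complex.add_re, Complex.one_re]
    linarith
  rw [arg_eq_arctan_of_re_pos hre]
  refine (abs_arctan_le_abs' _).trans ?_
  rw [abs_div, abs_of_pos hre]
  have him : |z.im| ≤ ‖z‖ := Complex.abs_im_le_norm z
  have hden : 1 - ‖z‖ ≤ (1 + z).re := by
    have := neg_le_of_abs_le (Complex.abs_re_le_norm z)
    simp only [Complex.add_re, Complex.one_re]; linarith
  have h0 : (0:ℝ) < 1 - ‖z‖ := by linarith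
  simp only [Complex.add_im, Complex.one_im, zero_add]
  exact div_le_div₀ (norm_nonneg z) him h0 hden

lemma arg_one_add_le_arg {ξ : ℂ} (hξ : ξ ≠ 0) (hre : 0 ≤ ξ.re) :
    |(1 + ξ).arg| ≤ |ξ.arg| := by
  rcases eq_or_lt_of_le hre with h | h
  · -- re ξ = 0, |arg ξ| = π/2
    have him : ξ.im ≠ 0 := by
      intro hi
      exact hξ (Complex.ext (h.symm) hi)
    have habs : |ξ.arg| = π / 2 := by
      rcases lt_or_gt_of_ne him with hi | hi
      · rw [Complex.arg_eq_neg_pi_div_two_iff.mpr ⟨h.symm, hi⟩, abs_neg,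
          abs_of_pos (by positivity)]
      · rw [Complex.arg_eq_pi_div_two_iff.mpr ⟨h.symm, hi⟩, abs_of_pos (by positivity)]
    rw [habs]
    exact (Complex.abs_arg_lt_pi_div_two_iff.mpr (Or.inl (by
      simp only [Complex.add_re, Complex.one_re]; linarith))).le
  · have h1 : 0 < (1 + ξ).re := by
      simp only [Complex.add_re, Complex.one_re]; linarith
    rw [arg_eq_arctan_of_re_pos h1, arg_eq_arctan_of_re_pos h]
    have hnn : ∀ y : ℝ, 0 ≤ y → 0 ≤ Real.arctan y := by
      intro y hy
      have := Real.arctan_strictMono.monotone hy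
      simpa using this
    have habs : ∀ x : ℝ, |Real.arctan x| = Real.arctan |x| := by
      intro x
      rcases le_total 0 x with hx | hx
      · rw [_root_.abs_of_nonneg hx, _root_.abs_of_nonneg (hnn x hx)]
      · rw [_root_.abs_of_nonpos hx, _root_.abs_of_nonpos (by
          have := hnn (-x) (by linarith)
          rw [Real.arctan_neg] at this
          linarith), ← Real.arctan_neg]
    rw [habs, habs]
    apply Real.arctan_strictMono.monotone
    simp only [Complex.add_im, Complex.one_im, zero_add, Complex.add_re, Complex.one_re]
    rw [abs_div, abs_div, _root_.abs_of_pos h,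
      _root_.abs_of_pos (show (0:ℝ) < 1 + ξ.re by linarith)]
    exact div_le_div_of_nonneg_left (abs_nonneg _) h (by linarith)

theorem arg_perturbation_estimate
    (ξ ζ : ℂ) (hζ : ‖ζ‖ < 1) :
    (ξ ≠ 0 → |ξ.arg| ≤ Real.pi / 2 →
      1 + ξ + ζ ≠ 0 ∧
        |(1 + ξ + ζ).arg| ≤ |ξ.arg| + ‖ζ‖ / (1 - ‖ζ‖)) ∧
    (ξ = 0 →
      1 + ζ ≠ 0 ∧ |(1 + ζ).arg| ≤ ‖ζ‖ / (1 - ‖ζ‖)) := by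
  have hζ1 : (0:ℝ) < 1 - ‖ζ‖ := by linarith
  constructor
  · intro hξ harg
    have hre : 0 ≤ ξ.re := Complex.abs_arg_le_pi_div_two_iff.mp harg
    set a : ℂ := 1 + ξ with ha_def
    have hare : (1:ℝ) ≤ a.re := by simp [ha_def]; linarith
    have ha0 : a ≠ 0 := by
      intro h; rw [h] at hare; simp at hare; linarith
    have haabs : (1:ℝ) ≤ ‖a‖ :=
      hare.trans ((Complex.re_le_norm a).trans_eq rfl)
    set b : ℂ := 1 + ζ / a with hb_def
    have hzb : ‖ζ / a‖ ≤ ‖ζ‖ := by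
      rw [norm_div]
      calc ‖ζ‖ / ‖a‖ ≤ ‖ζ‖ / 1 :=
            div_le_div_of_nonneg_left (norm_nonneg ζ) one_pos haabs
        _ = ‖ζ‖ := div_one _
    have hzb1 : ‖ζ / a‖ < 1 := lt_of_le_of_lt hzb hζ
    have hbre : 0 < b.re := by
      have := neg_le_of_abs_le (Complex.abs_re_le_norm (ζ / a))
      simp only [hb_def, Complex.add_re, Complex.one_re]
      linarith
    have hb0 : b ≠ 0 := by
      intro h; rw [h] at hbre; simp at hbre
    have hab : a * b = 1 + ξ + ζ := by
      rw [hb_def, mul_add, mul_one, mul_comm a, div_mul_cancel₀ ζ ha0]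
    have harga : |a.arg| < π / 2 :=
      Complex.abs_arg_lt_pi_div_two_iff.mpr (Or.inl (by linarith))
    have hargb : |b.arg| < π / 2 :=
      Complex.abs_arg_lt_pi_div_two_iff.mpr (Or.inl hbre)
    have hsum : a.arg + b.arg ∈ Set.Ioc (-π) π := by
      rw [abs_lt] at harga hargb
      have hpi := Real.pi_pos
      rw [Set.mem_Ioc]
      constructor
      · linarith [harga.1, hargb.1]
      · linarith [harga.2, hargb.2]
    have hmul : (a * b).arg = a.arg + b.arg := Complex.arg_mul ha0 hb0 hsum
    have hne : 1 + ξ + ζ ≠ 0 := by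
      rw [← hab]; exact mul_ne_zero ha0 hb0
    refine ⟨hne, ?_⟩
    rw [← hab, hmul]
    have h1 : |a.arg| ≤ |ξ.arg| := arg_one_add_le_arg hξ hre
    have h2 : |b.arg| ≤ ‖ζ / a‖ / (1 - ‖ζ / a‖) :=
      arg_one_add_le hzb1
    have h3 : ‖ζ / a‖ / (1 - ‖ζ / a‖) ≤
        ‖ζ‖ / (1 - ‖ζ‖) :=
      div_le_div₀ (norm_nonneg ζ) hzb hζ1 (by linarith)
    calc |a.arg + b.arg| ≤ |a.arg| + |b.arg| := abs_add_le _ _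
      _ ≤ |ξ.arg| + ‖ζ‖ / (1 - ‖ζ‖) := by linarith
  · intro hξ0
    have hne : 1 + ζ ≠ 0 := by
      intro h
      have : ζ = -1 := by linear_combination h - (1:ℂ)
      rw [this] at hζ; simp at hζ
    exact ⟨hne, arg_one_add_le hζ⟩
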